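/- Let k be a positive integer, ω = e^{2πi/3}, and let a₀, ..., a_{k-1} ∈ {0,1,2} with a_j ≠ a_{j+1} for all j (indices mod k), so the a_j are not all equal. If (3/k²)·|∑_{j=0}^{k-1} ω^{a_j}|² is a nonnegative integer, then k is divisible by 3. -/

import Mathlib

theorem stmt_15 (k : ℕ) [NeZero k] (a : ZMod k → Fin 3)
    (hadj : ∀ j : ZMod k, a j ≠ a (j + 1))
    (hint : ∃ m : ℕ,
      3 / (k : ℝ) ^ 2 *
          ‖∑ j : ZMod k,
            Complex.exp (2 * Real.pi * Complex.I / 3) ^ ((a j : ℕ))‖ ^ 2 = m) :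
    3 ∣ k := by
  classical
  obtain ⟨m, hm⟩ := hint
  set ω : ℂ := Complex.exp (2 * Real.pi * Complex.I / 3) with hωdef
  have hs3 : Real.sqrt 3 ^ 2 = 3 := Real.sq_sqrt (by norm_num)
  -- explicit value of ω
  have hωre : ω.re = -(1/2) ∧ ω.im = Real.sqrt 3 / 2 := by
    have h1 : (2 * (Real.pi:ℂ) * Complex.I / 3) = ((2 * Real.pi / 3 : ℝ) : ℂ) * Complex.I := by
      push_cast; ring
    have h2 : (2 * Real.pi / 3 : ℝ) = Real.pi - Real.pi / 3 := by ring
    rw [hωdef, h1, Complex.exp_mul_I]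
    rw [← Complex.ofReal_cos, ← Complex.ofReal_sin]
    constructor <;> simp [h2, Real.cos_pi_sub, Real.sin_pi_sub,
      Real.cos_pi_div_three, Real.sin_pi_div_three]
  have hω2 : (ω^2).re = -(1/2) ∧ (ω^2).im = -(Real.sqrt 3 / 2) := by
    rw [pow_two]
    constructor
    · rw [Complex.mul_re, hωre.1, hωre.2]
      linear_combination (-(1:ℝ)/4) * hs3
    · rw [Complex.mul_im, hωre.1, hωre.2]; ring
  -- fiber counts
  obtain ⟨x, hxdef⟩ : ∃ n, n = (Finset.univ.filter (fun j : ZMod k => a j = 0)).card := ⟨_, rfl⟩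
  obtain ⟨y, hydef⟩ : ∃ n, n = (Finset.univ.filter (fun j : ZMod k => a j = 1)).card := ⟨_, rfl⟩
  obtain ⟨z, hzdef⟩ : ∃ n, n = (Finset.univ.filter (fun j : ZMod k => a j = 2)).card := ⟨_, rfl⟩
  have hfiber : ∀ c : Fin 3,
      ∑ i : {i : ZMod k // a i = c}, ω ^ ((a i.1 : ℕ))
        = ((Finset.univ.filter (fun j : ZMod k => a j = c)).card : ℂ) * ω ^ (c : ℕ) := by
    intro c
    calc ∑ i : {i : ZMod k // a i = c}, ω ^ ((a i.1 : ℕ))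
        = ∑ _i : {i : ZMod k // a i = c}, ω ^ ((c : ℕ)) :=
          Finset.sum_congr rfl (fun i _ => by rw [i.2])
      _ = (Fintype.card {i : ZMod k // a i = c}) • ω ^ ((c : ℕ)) := by
          rw [Finset.sum_const, Finset.card_univ]
      _ = _ := by rw [Fintype.card_subtype, nsmul_eq_mul]
  have hS : (∑ j : ZMod k, ω ^ ((a j : ℕ))) = (x : ℂ) + y * ω + z * ω ^ 2 := by
    rw [hxdef, hydef, hzdef, ← Fintype.sum_fiberwise (fun j => a j) (fun j => ω ^ ((a j : ℕ))),
      Fin.sum_univ_three, hfiber 0, hfiber 1, hfiber 2]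
    norm_num
  have hxyz : x + y + z = k := by
    rw [hxdef, hydef, hzdef]
    have h := Fintype.sum_fiberwise (fun j => a j) (fun _ : ZMod k => (1 : ℕ))
    simp only [Finset.sum_const, Finset.card_univ, smul_eq_mul, mul_one,
      Fin.sum_univ_three, Fintype.card_subtype, ZMod.card] at h
    exact h
  -- constant contradiction
  have hconst : ∀ c : Fin 3,
      (Finset.univ.filter (fun j : ZMod k => a j = c)).card = k → False := by
    intro c hc
    have hu : (Finset.univ.filter (fun j : ZMod k => a j = c)) = Finset.univ :=
      Finset.eq_univ_of_card _ (by rw [hc, ZMod.card])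
    have hall : ∀ j : ZMod k, a j = c := by
      intro j
      have hj : j ∈ Finset.univ.filter (fun j : ZMod k => a j = c) := by
        rw [hu]; exact Finset.mem_univ j
      simpa using hj
    exact hadj 0 ((hall 0).trans (hall (0 + 1)).symm)
  -- real computation
  have hk0 : (k : ℝ) ≠ 0 := Nat.cast_ne_zero.mpr (NeZero.ne k)
  have hSre : (∑ j : ZMod k, ω ^ ((a j : ℕ))).re = (x : ℝ) - (y : ℝ)/2 - (z : ℝ)/2 := by
    rw [hS]
    simp only [Complex.add_re, Complex.mul_re, Complex.natCast_re, Complex.natCast_im,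
      hωre.1, hωre.2, hω2.1, hω2.2]
    ring
  have hSim : (∑ j : ZMod k, ω ^ ((a j : ℕ))).im = ((y : ℝ) - (z : ℝ)) * (Real.sqrt 3 / 2) := by
    rw [hS]
    simp only [Complex.add_im, Complex.mul_im, Complex.natCast_re, Complex.natCast_im,
      hωre.1, hωre.2, hω2.1, hω2.2]
    ring
  have habs : (‖∑ j : ZMod k, ω ^ ((a j : ℕ))‖) ^ 2
      = ((x : ℝ) - (y : ℝ)/2 - (z : ℝ)/2) ^ 2 + 3/4 * ((y : ℝ) - (z : ℝ)) ^ 2 := by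
    rw [Complex.sq_norm, Complex.normSq_apply, hSre, hSim]
    linear_combination (((y:ℝ) - (z:ℝ))^2/4) * hs3
  rw [habs] at hm
  have hR : (3 : ℝ) * ((2*(x:ℝ) - y - z)^2 + 3*((y:ℝ) - z)^2) = 4 * m * (k:ℝ)^2 := by
    have hk2 : (k:ℝ)^2 ≠ 0 := pow_ne_zero 2 hk0
    field_simp at hm
    linear_combination hm / 4
  have hZ : (3 : ℤ) * ((2*(x:ℤ) - y - z)^2 + 3*((y:ℤ) - z)^2) = 4 * m * (k:ℤ)^2 := by
    exact_mod_cast hR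
  -- integer reasoning
  clear hm hR hS habs hSre hSim hfiber hωre hω2 hs3 hk0
  clear_value ω
  clear hωdef ω
  have hsumZ : (x:ℤ) + y + z = k := by exact_mod_cast hxyz
  by_contra hnd
  have hnd' : ¬ (3:ℤ) ∣ (k:ℤ) := by exact_mod_cast hnd
  have hK1 : (1:ℤ) ≤ (k:ℤ) := by exact_mod_cast Nat.one_le_iff_ne_zero.mpr (NeZero.ne k)
  have hx0 : (0:ℤ) ≤ (x:ℤ) := Int.natCast_nonneg x
  have hy0 : (0:ℤ) ≤ (y:ℤ) := Int.natCast_nonneg y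
  have hz0 : (0:ℤ) ≤ (z:ℤ) := Int.natCast_nonneg z
  have hb : (3:ℤ) * ((2*(x:ℤ) - y - z)^2 + 3*((y:ℤ) - z)^2)
      = 12*(k:ℤ)^2 - 36*((x:ℤ)*y + y*z + z*x) := by
    linear_combination 12*((x:ℤ) + y + z + (k:ℤ))*hsumZ
  have hP : (0:ℤ) ≤ (x:ℤ)*y + y*z + z*x := by positivity
  have hmle : (m:ℤ) ≤ 3 := by
    by_contra h
    push_neg at h
    have hk2p : (1:ℤ) ≤ (k:ℤ)^2 := by nlinarith [hK1]
    nlinarith [hZ, hb, hP, hk2p, h]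
  have h3m : (3:ℤ) ∣ (m:ℤ) := by
    have hd : (3:ℤ) ∣ 4 * m * (k:ℤ)^2 := ⟨_, hZ.symm⟩
    have hp : Prime (3:ℤ) := Int.prime_three
    rcases hp.dvd_mul.mp hd with h | h
    · rcases hp.dvd_mul.mp h with h' | h'
      · norm_num at h'
      · exact h'
    · exact absurd (hp.dvd_of_dvd_pow h) hnd'
  have hm03 : m = 0 ∨ m = 3 := by omega
  rcases hm03 with rfl | rfl
  · -- m = 0 : sum is zero, so x = y = z
    norm_num at hZ
    have hu2 : (2*(x:ℤ) - y - z)^2 = 0 ∧ ((y:ℤ) - z)^2 = 0 := by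
      constructor <;>
        linarith [hZ, sq_nonneg (2*(x:ℤ) - y - z), sq_nonneg ((y:ℤ) - z)]
    have hu : (2*(x:ℤ) - y - z) = 0 := pow_eq_zero_iff two_ne_zero |>.mp hu2.1
    have hv : ((y:ℤ) - z) = 0 := pow_eq_zero_iff two_ne_zero |>.mp hu2.2
    exact hnd' (by omega)
  · -- m = 3 : one fiber is everything
    norm_num at hZ
    have huv : (2*(x:ℤ) - y - z)^2 + 3*((y:ℤ) - z)^2 = 4*(k:ℤ)^2 := by linarith [hZ]
    have key12 : (12:ℤ) * ((x:ℤ)*y + y*z + z*x) = 0 := by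
      linear_combination 4*((x:ℤ) + y + z + (k:ℤ))*hsumZ - huv
    have key : (x:ℤ)*y + y*z + z*x = 0 := by linarith
    have keyN : x*y + y*z + z*x = 0 := by exact_mod_cast key
    obtain ⟨⟨h1, h2⟩, h3⟩ : (x*y = 0 ∧ y*z = 0) ∧ z*x = 0 := by
      simpa [Nat.add_eq_zero] using keyN
    have hcases : (y = 0 ∧ z = 0) ∨ (x = 0 ∧ z = 0) ∨ (x = 0 ∧ y = 0) := by
      rcases Nat.mul_eq_zero.mp h1 with h | h <;>
        rcases Nat.mul_eq_zero.mp h2 with h' | h' <;>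
        rcases Nat.mul_eq_zero.mp h3 with h'' | h'' <;> tauto
    rcases hcases with ⟨h, h'⟩ | ⟨h, h'⟩ | ⟨h, h'⟩
    · exact hconst 0 (by rw [← hxdef]; omega)
    · exact hconst 1 (by rw [← hydef]; omega)
    · exact hconst 2 (by rw [← hzdef]; omega)
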